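/- Let n ≥ 2, let (X,d) be a metric space with |X| ≥ n in which every point is an accumulation point, and let T : X → X be a mapping contracting total pairwise distance on n points with constant α ∈ [0,1). Then T is a contraction: d(Tx,Ty) ≤ α·d(x,y) for all x,y ∈ X. -/

import Mathlib

noncomputable def totalS {X : Type*} [MetricSpace X] {n : ℕ} (x : Fin n → X) : ℝ :=
  ∑ i : Fin n, ∑ j ∈ Finset.Ioi i, dist (x i) (x j)

lemma term_le_totalS {X : Type*} [MetricSpace X] {n : ℕ} (v : Fin n → X)
    {i j : Fin n} (hij : i < j) : dist (v i) (v j) ≤ totalS v := by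
  unfold totalS
  calc dist (v i) (v j) ≤ ∑ k ∈ Finset.Ioi i, dist (v i) (v k) :=
        Finset.single_le_sum (fun k _ => dist_nonneg) (Finset.mem_Ioi.mpr hij)
    _ ≤ ∑ i : Fin n, ∑ j ∈ Finset.Ioi i, dist (v i) (v j) :=
        Finset.single_le_sum (f := fun i => ∑ j ∈ Finset.Ioi i, dist (v i) (v j))
          (fun k _ => Finset.sum_nonneg fun _ _ => dist_nonneg) (Finset.mem_univ i)

lemma totalS_le_of_forall {X : Type*} [MetricSpace X] {n : ℕ} (v : Fin n → X) (B : ℝ)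
    (hB : 0 ≤ B) (h : ∀ i j : Fin n, i < j → dist (v i) (v j) ≤ B) :
    totalS v ≤ (n : ℝ) * ((n : ℝ) * B) := by
  unfold totalS
  calc ∑ i : Fin n, ∑ j ∈ Finset.Ioi i, dist (v i) (v j)
      ≤ ∑ i : Fin n, ∑ _j ∈ Finset.Ioi i, B := by
        refine Finset.sum_le_sum fun i _ => Finset.sum_le_sum fun j hj => ?_
        exact h i j (Finset.mem_Ioi.mp hj)
    _ = ∑ i : Fin n, ((Finset.Ioi i).card : ℝ) * B := by
        simp [Finset.sum_const, nsmul_eq_mul]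
    _ ≤ ∑ _i : Fin n, (n : ℝ) * B := by
        refine Finset.sum_le_sum fun i _ => ?_
        have : (Finset.Ioi i).card ≤ n := by
          simpa using Finset.card_le_univ (Finset.Ioi i)
        exact mul_le_mul_of_nonneg_right (by exact_mod_cast this) hB
    _ = (n : ℝ) * ((n : ℝ) * B) := by simp [Finset.sum_const, mul_assoc]

lemma totalS_nonneg {X : Type*} [MetricSpace X] {n : ℕ} (v : Fin n → X) :
    0 ≤ totalS v :=
  Finset.sum_nonneg fun _ _ => Finset.sum_nonneg fun _ _ => dist_nonneg

lemma lower_totalS {X : Type*} [MetricSpace X] {m : ℕ} (v : Fin (m + 2) → X) :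
    dist (v 0) (v 1) + ∑ j ∈ Finset.Ioi (1 : Fin (m + 2)), dist (v 1) (v j) ≤ totalS v := by
  unfold totalS
  have h01 : (0 : Fin (m + 2)) ≠ 1 := by simp [Fin.ext_iff]
  have hlt : (0 : Fin (m + 2)) < 1 := by simp [Fin.lt_def]
  calc dist (v 0) (v 1) + ∑ j ∈ Finset.Ioi (1 : Fin (m + 2)), dist (v 1) (v j)
      ≤ (∑ j ∈ Finset.Ioi (0 : Fin (m+2)), dist (v 0) (v j))
        + ∑ j ∈ Finset.Ioi (1 : Fin (m + 2)), dist (v 1) (v j) := by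
        gcongr
        exact Finset.single_le_sum (fun k _ => dist_nonneg) (Finset.mem_Ioi.mpr hlt)
    _ = ∑ i ∈ ({0, 1} : Finset (Fin (m+2))), ∑ j ∈ Finset.Ioi i, dist (v i) (v j) := by
        rw [Finset.sum_pair h01]
    _ ≤ ∑ i : Fin (m+2), ∑ j ∈ Finset.Ioi i, dist (v i) (v j) :=
        Finset.sum_le_sum_of_subset_of_nonneg (Finset.subset_univ _)
          (fun i _ _ => Finset.sum_nonneg fun _ _ => dist_nonneg)

theorem stmt_9 {X : Type*} [MetricSpace X] (n : ℕ) (hn : 2 ≤ n)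
    (hcard : ∃ f : Fin n → X, Function.Injective f)
    (T : X → X) (α : ℝ) (hα0 : 0 ≤ α) (hα1 : α < 1)
    (hT : ∀ x : Fin n → X, Function.Injective x → totalS (T ∘ x) ≤ α * totalS x)
    (hacc : ∀ x : X, ∀ r : ℝ, 0 < r → (Metric.ball x r).Infinite) :
    ∀ x y : X, dist (T x) (T y) ≤ α * dist x y := by
  obtain ⟨m, rfl⟩ : ∃ m, n = m + 2 := ⟨n - 2, by omega⟩
  intro x y
  rcases eq_or_ne x y with rfl | hxy
  · simp
  have hα1' : α ≤ 1 := le_of_lt hα1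
  have h01 : (0 : Fin (m + 2)) ≠ 1 := by simp [Fin.ext_iff]
  have hlt01 : (0 : Fin (m + 2)) < 1 := by simp [Fin.lt_def]
  set D := dist x y with hD
  set C : ℝ := 2 * ((m : ℝ) + 2) ^ 2 with hC
  have hCpos : 0 < C := by positivity
  have key : ∀ ε : ℝ, 0 < ε → dist (T x) (T y) ≤ α * D + C * ε := by
    intro ε hε
    -- construct points
    have hinf : (Metric.ball x ε \ {x, y}).Infinite :=
      (hacc x ε hε).diff (Set.toFinite {x, y})
    obtain ⟨t, hts, htc⟩ := hinf.exists_subset_card_eq (m + 1)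
    set e : Fin (m + 1) → X := fun k => (t.equivFin.symm (Fin.cast htc.symm k) : X) with he
    have he_inj : Function.Injective e := by
      intro i j hij
      have := t.equivFin.symm.injective (Subtype.coe_injective hij)
      simpa [Fin.ext_iff] using this
    have he_mem : ∀ k, e k ∈ Metric.ball x ε \ {x, y} := fun k => hts (Subtype.coe_prop _)
    have he_x : ∀ k, e k ≠ x := fun k => by
      have := (he_mem k).2; simp at this; exact this.1
    have he_y : ∀ k, e k ≠ y := fun k => by
      have := (he_mem k).2; simp at this; exact this.2
    have he_ball : ∀ k, dist (e k) x ≤ ε := fun k =>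
      le_of_lt (Metric.mem_ball.mp (he_mem k).1)
    set e' : Fin m → X := fun k => e k.castSucc with he'
    set w : X := e (Fin.last m) with hw
    have he'_inj : Function.Injective e' :=
      he_inj.comp (Fin.castSucc_injective m)
    have hw_ne : w ∉ Set.range e' := by
      rintro ⟨k, hk⟩
      have := he_inj hk.symm
      exact absurd (congrArg Fin.val this) (by simp [Fin.ext_iff]; omega)
    have hx_ne : x ∉ Set.range e' := by rintro ⟨k, hk⟩; exact he_x _ hk
    have hy_ne : y ∉ Set.range e' := by rintro ⟨k, hk⟩; exact he_y _ hk
    set g : Fin (m + 2) → X := Fin.cons x (Fin.cons y e') with hg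
    set a : Fin (m + 2) → X := Fin.cons x (Fin.cons w e') with ha
    have hg_inj : Function.Injective g := by
      rw [hg, Fin.cons_injective_iff]
      constructor
      · rw [Fin.range_cons]
        rintro (h | h)
        · exact hxy h
        · exact hx_ne h
      · rw [Fin.cons_injective_iff]
        exact ⟨hy_ne, he'_inj⟩
    have ha_inj : Function.Injective a := by
      rw [ha, Fin.cons_injective_iff]
      constructor
      · rw [Fin.range_cons]
        rintro (h | h)
        · exact he_x _ h.symm
        · exact hx_ne h
      · rw [Fin.cons_injective_iff]
        exact ⟨hw_ne, he'_inj⟩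
    have hg0 : g 0 = x := by simp [hg]
    have hg1 : g 1 = y := by
      rw [hg, ← Fin.succ_zero_eq_one, Fin.cons_succ, Fin.cons_zero]
    have ha0 : a 0 = x := by simp [ha]
    have ha1 : a 1 = w := by
      rw [ha, ← Fin.succ_zero_eq_one, Fin.cons_succ, Fin.cons_zero]
    have tail : ∀ j : Fin (m + 2), 1 < j → ∃ k : Fin m, g j = e' k ∧ a j = e' k := by
      intro j hj
      have hj2 : 2 ≤ j.val := by
        have := (Fin.lt_def.mp hj); simp at this; omega
      have hjm : j.val - 2 < m := by omega
      obtain ⟨k, rfl⟩ : ∃ k : Fin m, j = Fin.succ (Fin.succ k) :=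
        ⟨⟨j.val - 2, hjm⟩, by apply Fin.ext; simp; omega⟩
      exact ⟨k, by simp [hg, Fin.cons_succ], by simp [ha, Fin.cons_succ]⟩
    have hgx : ∀ k : Fin (m + 2), k ≠ 1 → dist (g k) x ≤ ε := by
      intro k hk
      rcases eq_or_ne k 0 with rfl | hk0
      · simp [hg0]; linarith
      · have hk1 : 1 < k := by
          rw [Fin.lt_def]
          have h1 : k.val ≠ 0 := fun h => hk0 (Fin.ext (by simpa using h))
          have h2 : k.val ≠ 1 := fun h => hk (Fin.ext (by simpa using h))
          simp; omega
        obtain ⟨kk, hgk, -⟩ := tail k hk1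
        rw [hgk]; exact he_ball _
    have hax : ∀ k : Fin (m + 2), dist (a k) x ≤ ε := by
      intro k
      rcases eq_or_ne k 1 with rfl | hk1
      · rw [ha1]; exact he_ball _
      rcases eq_or_ne k 0 with rfl | hk0
      · simp [ha0]; linarith
      · have hk : 1 < k := by
          rw [Fin.lt_def]
          have h1 : k.val ≠ 0 := fun h => hk0 (Fin.ext (by simpa using h))
          have h2 : k.val ≠ 1 := fun h => hk1 (Fin.ext (by simpa using h))
          simp; omega
        obtain ⟨kk, -, hak⟩ := tail k hk
        rw [hak]; exact he_ball _
    -- small configuration bound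
    have haS : totalS a ≤ C * ε := by
      have := totalS_le_of_forall a (2 * ε) (by positivity) (fun i j _ => by
        calc dist (a i) (a j) ≤ dist (a i) x + dist x (a j) := dist_triangle _ _ _
          _ ≤ ε + ε := add_le_add (hax i) (by rw [dist_comm]; exact hax j)
          _ = 2 * ε := by ring)
      calc totalS a ≤ ((m:ℝ)+2) * (((m:ℝ)+2) * (2*ε)) := by exact_mod_cast this
        _ = C * ε := by rw [hC]; ring
    have himg_small : ∀ j : Fin (m + 2), 1 < j → dist (T x) (T (g j)) ≤ C * ε := by
      intro j hj
      obtain ⟨kk, hgk, hak⟩ := tail j hj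
      have h0j : (0 : Fin (m + 2)) < j := lt_trans hlt01 hj
      have h1 : dist ((T ∘ a) 0) ((T ∘ a) j) ≤ totalS (T ∘ a) := term_le_totalS _ h0j
      have h2 := hT a ha_inj
      have : dist (T x) (T (g j)) ≤ α * totalS a := by
        rw [← ha0, hgk, ← hak]
        exact le_trans h1 h2
      calc dist (T x) (T (g j)) ≤ α * totalS a := this
        _ ≤ 1 * (C * ε) := mul_le_mul hα1' haS (totalS_nonneg a) zero_le_one
        _ = C * ε := one_mul _
    -- upper bound for totalS g
    set M : ℕ := (Finset.Ioi (1 : Fin (m+2))).card with hM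
    have hDnn : (0:ℝ) ≤ D := dist_nonneg
    have hg_upper : totalS g ≤ (1 + (M:ℝ)) * D + C * ε := by
      have hterm : ∀ i j : Fin (m+2), i < j →
          dist (g i) (g j) ≤ (if i = 1 ∨ j = 1 then D else 0) + 2*ε := by
        intro i j hij
        rcases eq_or_ne i 1 with rfl | hi
        · rw [if_pos (Or.inl rfl)]
          calc dist (g 1) (g j) ≤ dist (g 1) x + dist x (g j) := dist_triangle _ _ _
            _ ≤ D + ε := add_le_add (le_of_eq (by rw [hg1, dist_comm]))
                (by rw [dist_comm]; exact hgx j hij.ne')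
            _ ≤ D + 2*ε := by linarith
        rcases eq_or_ne j 1 with rfl | hj
        · have hi0 : i = 0 := by
            apply Fin.ext
            have := Fin.lt_def.mp hij
            simp at this ⊢
            omega
          subst hi0
          rw [if_pos (show (0:Fin (m+2)) = 1 ∨ (1:Fin (m+2)) = 1 from Or.inr rfl),
            hg0, hg1]
          linarith
        · rw [if_neg (not_or.mpr ⟨hi, hj⟩)]
          have h1 := hgx i hi
          have h2 := hgx j hj
          calc dist (g i) (g j) ≤ dist (g i) x + dist x (g j) := dist_triangle _ _ _
            _ ≤ ε + ε := add_le_add h1 (by rw [dist_comm]; exact h2)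
            _ = 0 + 2*ε := by ring
      have hifsum : ∑ i : Fin (m+2), ∑ j ∈ Finset.Ioi i,
          (if i = 1 ∨ j = 1 then D else 0) = (1 + (M:ℝ)) * D := by
        have hz : ∀ i ∈ (Finset.univ : Finset (Fin (m+2))),
            i ∉ ({0,1} : Finset (Fin (m+2))) →
            (∑ j ∈ Finset.Ioi i, if i = 1 ∨ j = 1 then D else 0) = 0 := by
          intro i _ hi
          simp only [Finset.mem_insert, Finset.mem_singleton, not_or] at hi
          apply Finset.sum_eq_zero
          intro j hj
          refine if_neg (not_or.mpr ⟨hi.2, fun hj1 => ?_⟩)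
          have hij := Finset.mem_Ioi.mp hj
          subst hj1
          have := Fin.lt_def.mp hij
          simp at this
          exact hi.1 (Fin.ext (by simpa using this))
        rw [← Finset.sum_subset (Finset.subset_univ ({0,1} : Finset (Fin (m+2)))) hz,
          Finset.sum_pair h01]
        have h0s : (∑ j ∈ Finset.Ioi (0 : Fin (m+2)),
            if (0:Fin (m+2)) = 1 ∨ j = 1 then D else 0) = D := by
          have hc : ∀ j ∈ Finset.Ioi (0:Fin (m+2)),
              (if (0:Fin (m+2)) = 1 ∨ j = 1 then D else 0) = (if j = 1 then D else 0) := by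
            intro j _; simp [h01]
          rw [Finset.sum_congr rfl hc,
            Finset.sum_ite_eq' (Finset.Ioi (0:Fin (m+2))) 1 (fun _ => D),
            if_pos (Finset.mem_Ioi.mpr hlt01)]
        have h1s : (∑ j ∈ Finset.Ioi (1 : Fin (m+2)),
            if (1:Fin (m+2)) = 1 ∨ j = 1 then D else 0) = (M:ℝ) * D := by
          simp [hM, Finset.sum_const, nsmul_eq_mul]
        rw [h0s, h1s]; ring
      have hconst : ∑ i : Fin (m+2), ∑ _j ∈ Finset.Ioi i, (2*ε) ≤ C * ε := by
        calc ∑ i : Fin (m+2), ∑ _j ∈ Finset.Ioi i, (2*ε)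
            = ∑ i : Fin (m+2), ((Finset.Ioi i).card : ℝ) * (2*ε) := by
              simp [Finset.sum_const, nsmul_eq_mul]
          _ ≤ ∑ _i : Fin (m+2), ((m:ℝ)+2) * (2*ε) := by
              refine Finset.sum_le_sum fun i _ => ?_
              have hcard : (Finset.Ioi i).card ≤ m+2 := by
                simpa using Finset.card_le_univ (Finset.Ioi i)
              have h2 : ((Finset.Ioi i).card : ℝ) ≤ (m:ℝ)+2 := by exact_mod_cast hcard
              exact mul_le_mul_of_nonneg_right h2 (by positivity)
          _ = C * ε := by
              rw [Finset.sum_const]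
              simp only [nsmul_eq_mul, Finset.card_univ, Fintype.card_fin, hC]
              push_cast
              ring
      calc totalS g
          ≤ ∑ i : Fin (m+2), ∑ j ∈ Finset.Ioi i,
            ((if i = 1 ∨ j = 1 then D else 0) + 2*ε) := by
            unfold totalS
            exact Finset.sum_le_sum fun i _ =>
              Finset.sum_le_sum fun j hj => hterm i j (Finset.mem_Ioi.mp hj)
        _ = (∑ i : Fin (m+2), ∑ j ∈ Finset.Ioi i, (if i = 1 ∨ j = 1 then D else 0))
            + ∑ i : Fin (m+2), ∑ _j ∈ Finset.Ioi i, (2*ε) := by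
            rw [← Finset.sum_add_distrib]
            exact Finset.sum_congr rfl fun i _ => Finset.sum_add_distrib
        _ ≤ (1 + (M:ℝ)) * D + C * ε := by rw [hifsum]; linarith [hconst]
    -- lower bound for totalS (T ∘ g)
    have hlow : (1 + (M:ℝ)) * dist (T x) (T y) - (M:ℝ) * (C * ε) ≤ totalS (T ∘ g) := by
      have h1 := lower_totalS (T ∘ g)
      have h2 : (M:ℝ) * (dist (T x) (T y) - C * ε)
          ≤ ∑ j ∈ Finset.Ioi (1:Fin (m+2)), dist ((T ∘ g) 1) ((T ∘ g) j) := by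
        calc (M:ℝ) * (dist (T x) (T y) - C * ε)
            = ∑ _j ∈ Finset.Ioi (1:Fin (m+2)), (dist (T x) (T y) - C * ε) := by
              rw [Finset.sum_const, ← hM, nsmul_eq_mul]
          _ ≤ _ := by
              refine Finset.sum_le_sum fun j hj => ?_
              have hj' := Finset.mem_Ioi.mp hj
              have hsm := himg_small j hj'
              have htri : dist (T x) (T y) ≤ dist (T x) (T (g j)) + dist (T (g j)) (T y) :=
                dist_triangle _ _ _
              have hcm := dist_comm (T (g j)) (T y)
              simp only [Function.comp_apply, hg1]
              linarith
      have h3 : dist ((T ∘ g) 0) ((T ∘ g) 1) = dist (T x) (T y) := by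
        simp [hg0, hg1]
      rw [h3] at h1
      linarith
    -- combine
    have hchain := hT g hg_inj
    have hcomb : (1 + (M:ℝ)) * dist (T x) (T y) - (M:ℝ)*(C*ε)
        ≤ α * ((1 + (M:ℝ)) * D + C * ε) :=
      le_trans hlow (le_trans hchain (mul_le_mul_of_nonneg_left hg_upper hα0))
    have hM0 : (0:ℝ) ≤ (M:ℝ) := Nat.cast_nonneg _
    have hCε : (0:ℝ) < C * ε := mul_pos hCpos hε
    nlinarith [hcomb, hCε, hM0, hα1', hDnn,
      mul_nonneg hM0 hCε.le, mul_nonneg hM0 (sub_nonneg.mpr hα1' : (0:ℝ) ≤ 1 - α)]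
  apply le_of_forall_pos_le_add
  intro ε hε
  have hk := key (ε / C) (div_pos hε hCpos)
  calc dist (T x) (T y) ≤ α * D + C * (ε / C) := hk
    _ = α * D + ε := by field_simp
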